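/- Under the assumptions on J above and with μ additionally satisfying (μ(s₁)−μ(s₂))(s₁−s₂) ≥ −d_μ|s₁−s₂|² for all s₁,s₂ ≥ 0, the Clarke subdifferential ∂J is relaxed monotone: for all v₁,v₂ ∈ L²(Γ;ℝ^d) and η_i ∈ ∂J(v_i), i=1,2, one has ⟨η₁−η₂, v₁−v₂⟩_{L²(Γ;ℝ^d)} ≥ −F̄ d_μ ‖v₁−v₂‖²_{L²(Γ;ℝ^d)}. -/

import Mathlib

open MeasureTheory

/-- The Clarke generalized directional derivative
`φ⁰(x;v) = limsup_{y→x, t↓0} (φ(y+tv) − φ(y))/t`, written as an inf over `ε > 0` of sups. -/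
noncomputable def clarkeDeriv {X : Type*} [NormedAddCommGroup X] [NormedSpace ℝ X]
    (φ : X → ℝ) (x v : X) : ℝ :=
  sInf { c : ℝ | ∃ ε : ℝ, 0 < ε ∧
    c = sSup { q : ℝ | ∃ (y : X) (t : ℝ), ‖y - x‖ < ε ∧ 0 < t ∧ t < ε ∧
          q = (φ (y + t • v) - φ y) / t } }

/-- The Clarke generalized gradient `∂φ(x) = {ζ ∈ X' | φ⁰(x;v) ≥ ⟨ζ,v⟩ ∀ v}`. -/
def clarkeSubdiff {X : Type*} [NormedAddCommGroup X] [NormedSpace ℝ X]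
    (φ : X → ℝ) (x : X) : Set (X →L[ℝ] ℝ) :=
  { ζ | ∀ v : X, ζ v ≤ clarkeDeriv φ x v }

set_option linter.unusedSectionVars false
set_option maxHeartbeats 1600000
open Set

noncomputable def auxG (μf : ℝ → ℝ) (dμ : ℝ) (r : ℝ) : ℝ := ∫ s in (0:ℝ)..r, (μf s + dμ * s)

lemma auxg_cont {μf : ℝ → ℝ} (dμ : ℝ) (hμcont : Continuous μf) :
    Continuous (fun s => μf s + dμ * s) :=
  hμcont.add (continuous_const.mul continuous_id)

lemma auxg_mono {μf : ℝ → ℝ} {dμ : ℝ}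
    (hmono : ∀ s₁ s₂, 0 ≤ s₁ → 0 ≤ s₂ →
      (μf s₁ - μf s₂) * (s₁ - s₂) ≥ -dμ * |s₁ - s₂| ^ 2) :
    MonotoneOn (fun s => μf s + dμ * s) (Ici (0:ℝ)) := by
  intro a ha b hb hab
  rcases eq_or_lt_of_le hab with rfl | h
  · exact le_rfl
  · have H := hmono b a hb ha
    have habs : |b - a| = b - a := abs_of_pos (by linarith)
    rw [habs] at H
    simp only
    nlinarith [sub_pos.2 h]

lemma auxG_cont {μf : ℝ → ℝ} (dμ : ℝ) (hμcont : Continuous μf) :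
    Continuous (auxG μf dμ) :=
  intervalIntegral.continuous_primitive
    (fun a b => (auxg_cont dμ hμcont).intervalIntegrable a b) 0

lemma auxG_mono {μf : ℝ → ℝ} {μbar dμ : ℝ} (hμcont : Continuous μf) (hdμ : 0 < dμ)
    (hμ : ∀ s, 0 ≤ s → 0 ≤ μf s ∧ μf s ≤ μbar) :
    MonotoneOn (auxG μf dμ) (Ici (0:ℝ)) := by
  intro a ha b hb hab
  have h1 : IntervalIntegrable (fun s => μf s + dμ * s) volume 0 a :=
    (auxg_cont dμ hμcont).intervalIntegrable _ _
  have h2 : IntervalIntegrable (fun s => μf s + dμ * s) volume a b :=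
    (auxg_cont dμ hμcont).intervalIntegrable _ _
  have key := intervalIntegral.integral_add_adjacent_intervals h1 h2
  have hnn : 0 ≤ ∫ s in a..b, (μf s + dμ * s) := by
    apply intervalIntegral.integral_nonneg hab
    intro u hu
    have hu0 : (0:ℝ) ≤ u := le_trans ha hu.1
    have := (hμ u hu0).1
    nlinarith
  simp only [auxG]
  linarith [key]

lemma auxG_convex {μf : ℝ → ℝ} {dμ : ℝ} (hμcont : Continuous μf)
    (hmono : ∀ s₁ s₂, 0 ≤ s₁ → 0 ≤ s₂ →
      (μf s₁ - μf s₂) * (s₁ - s₂) ≥ -dμ * |s₁ - s₂| ^ 2) :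
    ConvexOn ℝ (Ici (0:ℝ)) (auxG μf dμ) := by
  have hd : ∀ r, HasDerivAt (auxG μf dμ) (μf r + dμ * r) r := fun r =>
    intervalIntegral.integral_hasDerivAt_right
      ((auxg_cont dμ hμcont).intervalIntegrable _ _)
      (auxg_cont dμ hμcont).aestronglyMeasurable.stronglyMeasurableAtFilter
      (auxg_cont dμ hμcont).continuousAt
  apply MonotoneOn.convexOn_of_deriv (convex_Ici 0)
    (auxG_cont dμ hμcont).continuousOn
    (fun r hr => (hd r).differentiableAt.differentiableWithinAt)
  intro a ha b hb hab
  rw [interior_Ici] at ha hb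
  rw [(hd a).deriv, (hd b).deriv]
  exact auxg_mono hmono (Set.mem_Ici.2 (le_of_lt ha)) (Set.mem_Ici.2 (le_of_lt hb)) hab

lemma auxG_lip {μf : ℝ → ℝ} {μbar dμ : ℝ} (hμcont : Continuous μf) (hdμ : 0 < dμ)
    (hμ : ∀ s, 0 ≤ s → 0 ≤ μf s ∧ μf s ≤ μbar)
    {r₁ r₂ : ℝ} (h₁ : 0 ≤ r₁) (h₂ : 0 ≤ r₂) :
    |auxG μf dμ r₁ - auxG μf dμ r₂| ≤ (μbar + dμ * (r₁ + r₂)) * |r₁ - r₂| := by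
  have h1 : IntervalIntegrable (fun s => μf s + dμ * s) volume 0 r₂ :=
    (auxg_cont dμ hμcont).intervalIntegrable _ _
  have h2 : IntervalIntegrable (fun s => μf s + dμ * s) volume r₂ r₁ :=
    (auxg_cont dμ hμcont).intervalIntegrable _ _
  have key := intervalIntegral.integral_add_adjacent_intervals h1 h2
  have : auxG μf dμ r₁ - auxG μf dμ r₂ = ∫ s in r₂..r₁, (μf s + dμ * s) := by
    simp only [auxG]; linarith
  rw [this]
  have hb : ∀ s ∈ Set.uIoc r₂ r₁, ‖μf s + dμ * s‖ ≤ μbar + dμ * (r₁ + r₂) := by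
    intro s hs
    have hmin : 0 ≤ min r₂ r₁ := le_min h₂ h₁
    have hs0 : 0 ≤ s := le_of_lt (lt_of_le_of_lt hmin hs.1)
    have hsmax : s ≤ max r₂ r₁ := hs.2
    have hmax : max r₂ r₁ ≤ r₁ + r₂ := by
      rcases max_cases r₂ r₁ with ⟨h, _⟩ | ⟨h, _⟩ <;> rw [h] <;> linarith
    have := hμ s hs0
    rw [Real.norm_eq_abs, abs_of_nonneg (by nlinarith [this.1])]
    nlinarith [this.2]
  calc |∫ s in r₂..r₁, (μf s + dμ * s)| ≤ (μbar + dμ * (r₁ + r₂)) * |r₁ - r₂| :=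
    intervalIntegral.norm_integral_le_of_norm_le_const hb

lemma auxG_decomp {μf : ℝ → ℝ} (dμ : ℝ) (hμcont : Continuous μf) (r : ℝ) :
    (∫ s in (0:ℝ)..r, μf s) = auxG μf dμ r - dμ / 2 * r ^ 2 := by
  have h1 : IntervalIntegrable μf volume 0 r := hμcont.intervalIntegrable _ _
  have h2 : IntervalIntegrable (fun s => dμ * s) volume 0 r :=
    (continuous_const.mul continuous_id).intervalIntegrable _ _
  simp only [auxG]
  rw [intervalIntegral.integral_add h1 h2, intervalIntegral.integral_const_mul,
    integral_id]
  ring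

lemma auxMu_lip {μf : ℝ → ℝ} {μbar : ℝ} (hμcont : Continuous μf)
    (hμ : ∀ s, 0 ≤ s → 0 ≤ μf s ∧ μf s ≤ μbar)
    {r₁ r₂ : ℝ} (h₁ : 0 ≤ r₁) (h₂ : 0 ≤ r₂) :
    |(∫ s in (0:ℝ)..r₁, μf s) - ∫ s in (0:ℝ)..r₂, μf s| ≤ μbar * |r₁ - r₂| := by
  have h1 : IntervalIntegrable μf volume 0 r₂ := hμcont.intervalIntegrable _ _
  have h2 : IntervalIntegrable μf volume r₂ r₁ := hμcont.intervalIntegrable _ _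
  have key := intervalIntegral.integral_add_adjacent_intervals h1 h2
  have heq : (∫ s in (0:ℝ)..r₁, μf s) - ∫ s in (0:ℝ)..r₂, μf s = ∫ s in r₂..r₁, μf s := by
    linarith
  rw [heq]
  apply intervalIntegral.norm_integral_le_of_norm_le_const (f := μf)
  intro s hs
  have hmin : 0 ≤ min r₂ r₁ := le_min h₂ h₁
  have hs0 : 0 ≤ s := le_of_lt (lt_of_le_of_lt hmin hs.1)
  have := hμ s hs0
  rw [Real.norm_eq_abs, abs_of_nonneg this.1]
  exact this.2

section lp
variable {Γ : Type*} [MeasurableSpace Γ] {γm : Measure Γ} [IsFiniteMeasure γm] {d : ℕ}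

local notation "X" => Lp (EuclideanSpace ℝ (Fin d)) 2 γm

lemma lp_int_norm (u : X) : Integrable (fun x => ‖u x‖) γm :=
  ((Lp.memLp u).integrable (by norm_num)).norm

lemma lp_int_normsq (u : X) : Integrable (fun x => ‖u x‖ ^ 2) γm := by
  have h := (Lp.memLp u).integrable_norm_rpow (by norm_num) (by norm_num)
  simpa [ENNReal.toReal_ofNat, Real.rpow_natCast] using h

lemma lp_normsq_eq (u : X) : ∫ x, ‖u x‖ ^ 2 ∂γm = ‖u‖ ^ 2 := by
  have h : (inner ℝ u u : ℝ) = ‖u‖ ^ 2 := real_inner_self_eq_norm_sq u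
  rw [MeasureTheory.L2.inner_def] at h
  rw [← h]
  refine integral_congr_ae (Filter.Eventually.of_forall fun x => ?_)
  exact (real_inner_self_eq_norm_sq (u x)).symm

lemma lp_coe_add_smul (y w : X) (t : ℝ) :
    ∀ᵐ x ∂γm, (y + t • w) x = y x + t • (w x) := by
  filter_upwards [Lp.coeFn_add y (t • w), Lp.coeFn_smul t w] with x h1 h2
  rw [h1]; simp only [Pi.add_apply]; rw [h2]; rfl

lemma lp_coe_add (y w : X) : ∀ᵐ x ∂γm, (y + w) x = y x + w x := by
  filter_upwards [Lp.coeFn_add y w] with x h1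
  rw [h1]; rfl

lemma lp_coe_sub (y w : X) : ∀ᵐ x ∂γm, (y - w) x = y x - w x := by
  filter_upwards [Lp.coeFn_sub y w] with x h1
  rw [h1]; rfl

variable {F : Γ → ℝ} {Fbar : ℝ} {μf : ℝ → ℝ} {μbar dμ : ℝ}

-- a.e.-strong measurability of typical integrands
lemma meas_F_comp (hFmeas : Measurable F) (u : X) {φ : ℝ → ℝ} (hφ : Continuous φ) :
    AEStronglyMeasurable (fun x => F x * φ ‖u x‖) γm :=
  hFmeas.aestronglyMeasurable.mul (hφ.comp_aestronglyMeasurable (Lp.aestronglyMeasurable u).norm)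

lemma int_FG (hFmeas : Measurable F) (hF : ∀ᵐ x ∂γm, 0 ≤ F x ∧ F x ≤ Fbar)
    (hμcont : Continuous μf) (hdμ : 0 < dμ)
    (hμ : ∀ s, 0 ≤ s → 0 ≤ μf s ∧ μf s ≤ μbar) (u : X) :
    Integrable (fun x => F x * auxG μf dμ ‖u x‖) γm := by
  refine Integrable.mono' (g := fun x => Fbar * ((μbar + dμ * ‖u x‖) * ‖u x‖)) ?_
    (meas_F_comp hFmeas u (auxG_cont dμ hμcont)) ?_
  · have h1 : Integrable (fun x => μbar * ‖u x‖) γm := (lp_int_norm u).const_mul _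
    have h2 : Integrable (fun x => dμ * ‖u x‖ ^ 2) γm := (lp_int_normsq u).const_mul _
    have h3 := (h1.add h2).const_mul Fbar
    refine h3.congr (Filter.Eventually.of_forall fun x => ?_)
    simp only [Pi.add_apply]; ring
  · filter_upwards [hF] with x hx
    have hb : |auxG μf dμ ‖u x‖| ≤ (μbar + dμ * ‖u x‖) * ‖u x‖ := by
      have h0 : auxG μf dμ 0 = 0 := by
        simp [auxG, intervalIntegral.integral_same]
      have := auxG_lip hμcont hdμ hμ (norm_nonneg (u x)) (le_refl (0:ℝ))
      simpa [h0, abs_of_nonneg (norm_nonneg (u x))] using this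
    have habs : |F x * auxG μf dμ ‖u x‖| ≤ Fbar * |auxG μf dμ ‖u x‖| := by
      rw [abs_mul]
      exact mul_le_mul_of_nonneg_right (by rw [abs_of_nonneg hx.1]; exact hx.2) (abs_nonneg _)
    calc |F x * auxG μf dμ ‖u x‖| ≤ Fbar * |auxG μf dμ ‖u x‖| := habs
      _ ≤ Fbar * ((μbar + dμ * ‖u x‖) * ‖u x‖) := by
          apply mul_le_mul_of_nonneg_left hb
          exact le_trans hx.1 hx.2

lemma int_FMu (hFmeas : Measurable F) (hF : ∀ᵐ x ∂γm, 0 ≤ F x ∧ F x ≤ Fbar)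
    (hμcont : Continuous μf)
    (hμ : ∀ s, 0 ≤ s → 0 ≤ μf s ∧ μf s ≤ μbar) (u : X) :
    Integrable (fun x => F x * ∫ s in (0:ℝ)..‖u x‖, μf s) γm := by
  have hIcont : Continuous (fun r => ∫ s in (0:ℝ)..r, μf s) :=
    intervalIntegral.continuous_primitive (fun a b => hμcont.intervalIntegrable a b) 0
  refine Integrable.mono' (g := fun x => Fbar * (μbar * ‖u x‖))
    (((lp_int_norm u).const_mul _).const_mul _) (meas_F_comp hFmeas u hIcont) ?_
  filter_upwards [hF] with x hx
  have h0 : (∫ s in (0:ℝ)..(0:ℝ), μf s) = 0 := intervalIntegral.integral_same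
  have hb : |∫ s in (0:ℝ)..‖u x‖, μf s| ≤ μbar * ‖u x‖ := by
    have := auxMu_lip hμcont hμ (norm_nonneg (u x)) (le_refl (0:ℝ))
    simpa [h0, abs_of_nonneg (norm_nonneg (u x))] using this
  rw [Real.norm_eq_abs, abs_mul]
  calc |F x| * |∫ s in (0:ℝ)..‖u x‖, μf s| ≤ Fbar * (μbar * ‖u x‖) :=
    mul_le_mul (by rw [abs_of_nonneg hx.1]; exact hx.2) hb (abs_nonneg _) (le_trans hx.1 hx.2)

lemma int_Fnormsq (hFmeas : Measurable F) (hF : ∀ᵐ x ∂γm, 0 ≤ F x ∧ F x ≤ Fbar) (u : X) :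
    Integrable (fun x => F x * ‖u x‖ ^ 2) γm := by
  refine Integrable.mono' (g := fun x => Fbar * ‖u x‖ ^ 2)
    ((lp_int_normsq u).const_mul _) (meas_F_comp (φ := fun r => r ^ 2) hFmeas u (by continuity)) ?_
  filter_upwards [hF] with x hx
  rw [Real.norm_eq_abs, abs_mul, abs_of_nonneg (sq_nonneg ‖(u : Γ → EuclideanSpace ℝ (Fin d)) x‖), abs_of_nonneg hx.1]
  exact mul_le_mul_of_nonneg_right hx.2 (sq_nonneg _)

lemma int_Finner (hFmeas : Measurable F) (hF : ∀ᵐ x ∂γm, 0 ≤ F x ∧ F x ≤ Fbar) (u w : X) :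
    Integrable (fun x => F x * (inner ℝ (u x) (w x) : ℝ)) γm := by
  refine Integrable.mono' (g := fun x => Fbar * ‖(inner ℝ (u x) (w x) : ℝ)‖)
    (((MeasureTheory.L2.integrable_inner (𝕜 := ℝ) u w).norm).const_mul _)
    (hFmeas.aestronglyMeasurable.mul
      (MeasureTheory.L2.integrable_inner (𝕜 := ℝ) u w).aestronglyMeasurable) ?_
  filter_upwards [hF] with x hx
  rw [norm_mul]
  exact mul_le_mul_of_nonneg_right
    (by rw [Real.norm_eq_abs, abs_of_nonneg hx.1]; exact hx.2) (norm_nonneg _)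
lemma amgm {ε p n : ℝ} (hε : 0 < ε) : p * n ≤ ε / 2 * p ^ 2 + 1 / (2 * ε) * n ^ 2 := by
  have key : ε / 2 * p ^ 2 + 1 / (2 * ε) * n ^ 2 - p * n = (ε * p - n) ^ 2 / (2 * ε) := by
    field_simp; ring
  nlinarith [div_nonneg (sq_nonneg (ε * p - n)) (by linarith : (0:ℝ) ≤ 2 * ε)]

lemma int_sq (u₁ u₂ : X) :
    Integrable (fun x => (μbar + dμ * (‖u₁ x‖ + ‖u₂ x‖)) ^ 2) γm := by
  refine Integrable.mono'
    (g := fun x => 2 * μbar ^ 2 + (4 * dμ ^ 2 * ‖u₁ x‖ ^ 2 + 4 * dμ ^ 2 * ‖u₂ x‖ ^ 2)) ?_ ?_ ?_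
  · exact (integrable_const _).add
      (((lp_int_normsq u₁).const_mul _).add ((lp_int_normsq u₂).const_mul _))
  · have hc : Continuous (fun p : ℝ => (μbar + dμ * p) ^ 2) := by continuity
    exact hc.comp_aestronglyMeasurable
      ((Lp.aestronglyMeasurable u₁).norm.add (Lp.aestronglyMeasurable u₂).norm)
  · refine Filter.Eventually.of_forall fun x => ?_
    rw [Real.norm_eq_abs, abs_of_nonneg (sq_nonneg _)]
    show (μbar + dμ * (‖u₁ x‖ + ‖u₂ x‖)) ^ 2
      ≤ 2 * μbar ^ 2 + (4 * dμ ^ 2 * ‖u₁ x‖ ^ 2 + 4 * dμ ^ 2 * ‖u₂ x‖ ^ 2)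
    nlinarith [sq_nonneg (μbar - dμ * (‖u₁ x‖ + ‖u₂ x‖)), sq_nonneg (dμ * ‖u₁ x‖ - dμ * ‖u₂ x‖)]

lemma jc_lip (hFmeas : Measurable F) (hF : ∀ᵐ x ∂γm, 0 ≤ F x ∧ F x ≤ Fbar)
    (hμcont : Continuous μf) (hdμ : 0 < dμ)
    (hμ : ∀ s, 0 ≤ s → 0 ≤ μf s ∧ μf s ≤ μbar)
    (hFbar : 0 ≤ Fbar) (hμbar : 0 ≤ μbar)
    (u₁ u₂ : X) {ε M : ℝ} (hε : 0 < ε) (hd : ‖u₁ - u₂‖ ≤ ε)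
    (hM₁ : ‖u₁‖ ≤ M) (hM₂ : ‖u₂‖ ≤ M) :
    (∫ x, F x * auxG μf dμ ‖u₁ x‖ ∂γm) - (∫ x, F x * auxG μf dμ ‖u₂ x‖ ∂γm)
      ≤ ε * (Fbar / 2 * (3 * μbar ^ 2 * (γm Set.univ).toReal + 12 * dμ ^ 2 * M ^ 2 + 1)) := by
  set z := u₁ - u₂ with hz
  have hM0 : 0 ≤ M := le_trans (norm_nonneg _) hM₁
  have key : ∀ᵐ x ∂γm, F x * auxG μf dμ ‖u₁ x‖ - F x * auxG μf dμ ‖u₂ x‖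
      ≤ Fbar * (ε / 2 * (μbar + dμ * (‖u₁ x‖ + ‖u₂ x‖)) ^ 2 + 1 / (2 * ε) * ‖z x‖ ^ 2) := by
    filter_upwards [hF, lp_coe_sub u₁ u₂] with x hx hzx
    set a₁ := ‖u₁ x‖; set a₂ := ‖u₂ x‖
    set p := μbar + dμ * (a₁ + a₂) with hp
    have hp0 : 0 ≤ p := by
      have := norm_nonneg (u₁ x); have := norm_nonneg (u₂ x); positivity
    have hGl : |auxG μf dμ a₁ - auxG μf dμ a₂| ≤ p * |a₁ - a₂| :=
      auxG_lip hμcont hdμ hμ (norm_nonneg _) (norm_nonneg _)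
    have hdn : |a₁ - a₂| ≤ ‖z x‖ := by
      rw [hzx]; exact abs_norm_sub_norm_le (u₁ x) (u₂ x)
    have h1 : F x * auxG μf dμ a₁ - F x * auxG μf dμ a₂
        ≤ Fbar * |auxG μf dμ a₁ - auxG μf dμ a₂| := by
      have : F x * (auxG μf dμ a₁ - auxG μf dμ a₂) ≤ F x * |auxG μf dμ a₁ - auxG μf dμ a₂| :=
        mul_le_mul_of_nonneg_left (le_abs_self _) hx.1
      nlinarith [mul_le_mul_of_nonneg_right hx.2 (abs_nonneg (auxG μf dμ a₁ - auxG μf dμ a₂))]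
    have h2 : p * |a₁ - a₂| ≤ p * ‖z x‖ := mul_le_mul_of_nonneg_left hdn hp0
    have h3 : p * ‖z x‖ ≤ ε / 2 * p ^ 2 + 1 / (2 * ε) * ‖z x‖ ^ 2 := amgm hε
    have h4 : Fbar * |auxG μf dμ a₁ - auxG μf dμ a₂| ≤
        Fbar * (ε / 2 * p ^ 2 + 1 / (2 * ε) * ‖z x‖ ^ 2) :=
      mul_le_mul_of_nonneg_left (le_trans hGl (le_trans h2 h3)) hFbar
    linarith
  have hint1 := int_FG hFmeas hF hμcont hdμ hμ u₁
  have hint2 := int_FG hFmeas hF hμcont hdμ hμ u₂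
  have hintsq := int_sq (μbar := μbar) (dμ := dμ) u₁ u₂
  have hintz := lp_int_normsq z
  have hintR : Integrable (fun x => Fbar * (ε / 2 * (μbar + dμ * (‖u₁ x‖ + ‖u₂ x‖)) ^ 2
      + 1 / (2 * ε) * ‖z x‖ ^ 2)) γm :=
    (((hintsq.const_mul _).add (hintz.const_mul _)).const_mul _)
  have hLd : Integrable (fun x => F x * auxG μf dμ ‖u₁ x‖ - F x * auxG μf dμ ‖u₂ x‖) γm :=
    hint1.sub hint2
  have hmono := integral_mono_ae hLd hintR key
  rw [integral_sub hint1 hint2] at hmono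
  have hRrw : ∫ x, Fbar * (ε / 2 * (μbar + dμ * (‖u₁ x‖ + ‖u₂ x‖)) ^ 2
      + 1 / (2 * ε) * ‖z x‖ ^ 2) ∂γm
      = Fbar * (ε / 2 * (∫ x, (μbar + dμ * (‖u₁ x‖ + ‖u₂ x‖)) ^ 2 ∂γm)
        + 1 / (2 * ε) * (∫ x, ‖z x‖ ^ 2 ∂γm)) := by
    rw [integral_const_mul, integral_add (hintsq.const_mul _) (hintz.const_mul _),
      integral_const_mul, integral_const_mul]
  rw [hRrw, lp_normsq_eq z] at hmono
  have hSbound : (∫ x, (μbar + dμ * (‖u₁ x‖ + ‖u₂ x‖)) ^ 2 ∂γm)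
      ≤ 3 * μbar ^ 2 * (γm Set.univ).toReal + 12 * dμ ^ 2 * M ^ 2 := by
    have hA : Integrable (fun x => 4 * dμ ^ 2 * ‖u₁ x‖ ^ 2) γm := (lp_int_normsq u₁).const_mul _
    have hB : Integrable (fun x => 4 * dμ ^ 2 * ‖u₂ x‖ ^ 2) γm := (lp_int_normsq u₂).const_mul _
    have hAB : Integrable (fun x => 4 * dμ ^ 2 * ‖u₁ x‖ ^ 2 + 4 * dμ ^ 2 * ‖u₂ x‖ ^ 2) γm :=
      hA.add hB
    have hC : Integrable (fun _ : Γ => 2 * μbar ^ 2) γm := integrable_const _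
    have hb : (∫ x, (μbar + dμ * (‖u₁ x‖ + ‖u₂ x‖)) ^ 2 ∂γm)
        ≤ ∫ x, (2 * μbar ^ 2 + (4 * dμ ^ 2 * ‖u₁ x‖ ^ 2 + 4 * dμ ^ 2 * ‖u₂ x‖ ^ 2)) ∂γm := by
      refine integral_mono_ae hintsq (hC.add hAB)
        (Filter.Eventually.of_forall fun x => ?_)
      show (μbar + dμ * (‖u₁ x‖ + ‖u₂ x‖)) ^ 2
        ≤ 2 * μbar ^ 2 + (4 * dμ ^ 2 * ‖u₁ x‖ ^ 2 + 4 * dμ ^ 2 * ‖u₂ x‖ ^ 2)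
      nlinarith [sq_nonneg (μbar - dμ * (‖u₁ x‖ + ‖u₂ x‖)),
        sq_nonneg (dμ * ‖u₁ x‖ - dμ * ‖u₂ x‖)]
    have e1 : ∫ x, 4 * dμ ^ 2 * ‖u₁ x‖ ^ 2 ∂γm = 4 * dμ ^ 2 * ‖u₁‖ ^ 2 := by
      rw [integral_const_mul, lp_normsq_eq]
    have e2 : ∫ x, 4 * dμ ^ 2 * ‖u₂ x‖ ^ 2 ∂γm = 4 * dμ ^ 2 * ‖u₂‖ ^ 2 := by
      rw [integral_const_mul, lp_normsq_eq]
    rw [integral_add hC hAB, integral_add hA hB, e1, e2, integral_const] at hb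
    have hγ : (0:ℝ) ≤ (γm Set.univ).toReal := ENNReal.toReal_nonneg
    have m1 : ‖u₁‖ ^ 2 ≤ M ^ 2 := by nlinarith [norm_nonneg u₁]
    have m2 : ‖u₂‖ ^ 2 ≤ M ^ 2 := by nlinarith [norm_nonneg u₂]
    simp only [smul_eq_mul, measureReal_def] at hb
    have hc4 : (0:ℝ) ≤ 4 * dμ ^ 2 := by positivity
    have b1 := mul_le_mul_of_nonneg_left m1 hc4
    have b2 := mul_le_mul_of_nonneg_left m2 hc4
    have b3 : (0:ℝ) ≤ μbar ^ 2 * (γm Set.univ).toReal := mul_nonneg (sq_nonneg _) hγ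
    have b4 : (0:ℝ) ≤ 4 * dμ ^ 2 * M ^ 2 := mul_nonneg hc4 (sq_nonneg _)
    linarith only [hb, b1, b2, b3, b4]
  have hz2 : ‖z‖ ^ 2 ≤ ε ^ 2 := pow_le_pow_left₀ (norm_nonneg z) hd 2
  have hfin : Fbar * (ε / 2 * (∫ x, (μbar + dμ * (‖u₁ x‖ + ‖u₂ x‖)) ^ 2 ∂γm)
        + 1 / (2 * ε) * ‖z‖ ^ 2)
      ≤ ε * (Fbar / 2 * (3 * μbar ^ 2 * (γm Set.univ).toReal + 12 * dμ ^ 2 * M ^ 2 + 1)) := by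
    have h5 : 1 / (2 * ε) * ‖z‖ ^ 2 ≤ ε / 2 := by
      rw [div_mul_eq_mul_div, div_le_div_iff₀ (by linarith) (by norm_num)]
      linarith only [hz2]
    have h6 : 0 ≤ ε / 2 := by linarith
    have hS0 : ε / 2 * (∫ x, (μbar + dμ * (‖u₁ x‖ + ‖u₂ x‖)) ^ 2 ∂γm)
        ≤ ε / 2 * (3 * μbar ^ 2 * (γm Set.univ).toReal + 12 * dμ ^ 2 * M ^ 2) :=
      mul_le_mul_of_nonneg_left hSbound h6
    have hsum := mul_le_mul_of_nonneg_left (add_le_add hS0 h5) hFbar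
    have hring : Fbar * (ε / 2 * (3 * μbar ^ 2 * (γm Set.univ).toReal + 12 * dμ ^ 2 * M ^ 2)
        + ε / 2)
        = ε * (Fbar / 2 * (3 * μbar ^ 2 * (γm Set.univ).toReal + 12 * dμ ^ 2 * M ^ 2 + 1)) := by
      ring
    linarith only [hsum, hring]
  linarith only [hmono, hfin]
lemma jc_slope (hFmeas : Measurable F) (hF : ∀ᵐ x ∂γm, 0 ≤ F x ∧ F x ≤ Fbar)
    (hμcont : Continuous μf) (hdμ : 0 < dμ)
    (hμ : ∀ s, 0 ≤ s → 0 ≤ μf s ∧ μf s ≤ μbar)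
    (hmono : ∀ s₁ s₂, 0 ≤ s₁ → 0 ≤ s₂ →
      (μf s₁ - μf s₂) * (s₁ - s₂) ≥ -dμ * |s₁ - s₂| ^ 2)
    (y v : X) {t : ℝ} (ht : 0 < t) (ht1 : t ≤ 1) :
    (∫ x, F x * auxG μf dμ ‖(y + t • v) x‖ ∂γm) - (∫ x, F x * auxG μf dμ ‖y x‖ ∂γm)
      ≤ t * ((∫ x, F x * auxG μf dμ ‖(y + v) x‖ ∂γm) - (∫ x, F x * auxG μf dμ ‖y x‖ ∂γm)) := by
  have hGm := auxG_mono hμcont hdμ hμ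
  have hGc := auxG_convex hμcont hmono
  have key : ∀ᵐ x ∂γm, F x * auxG μf dμ ‖(y + t • v) x‖
      ≤ (1 - t) * (F x * auxG μf dμ ‖y x‖) + t * (F x * auxG μf dμ ‖(y + v) x‖) := by
    filter_upwards [hF, lp_coe_add_smul y v t, lp_coe_add y v] with x hx h1 h2
    rw [h1, h2]
    set a := y x; set b := v x
    have hcomb : a + t • b = (1 - t) • a + t • (a + b) := by module
    have hnorm : ‖a + t • b‖ ≤ (1 - t) * ‖a‖ + t * ‖a + b‖ := by
      rw [hcomb]
      refine le_trans (norm_add_le _ _) ?_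
      rw [norm_smul, norm_smul, Real.norm_eq_abs, Real.norm_eq_abs,
        abs_of_nonneg (by linarith), abs_of_nonneg ht.le]
    have hmem : (1 - t) * ‖a‖ + t * ‖a + b‖ ∈ Set.Ici (0:ℝ) := by
      have := norm_nonneg a; have := norm_nonneg (a + b)
      simp only [Set.mem_Ici]; nlinarith
    have hG1 : auxG μf dμ ‖a + t • b‖ ≤ auxG μf dμ ((1 - t) * ‖a‖ + t * ‖a + b‖) :=
      hGm (Set.mem_Ici.2 (norm_nonneg _)) hmem hnorm
    have hG2 : auxG μf dμ ((1 - t) * ‖a‖ + t * ‖a + b‖)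
        ≤ (1 - t) * auxG μf dμ ‖a‖ + t * auxG μf dμ ‖a + b‖ := by
      have := hGc.2 (Set.mem_Ici.2 (norm_nonneg a)) (Set.mem_Ici.2 (norm_nonneg (a + b)))
        (by linarith : (0:ℝ) ≤ 1 - t) ht.le (by ring)
      simpa [smul_eq_mul] using this
    have hcomp : auxG μf dμ ‖a + t • b‖
        ≤ (1 - t) * auxG μf dμ ‖a‖ + t * auxG μf dμ ‖a + b‖ := le_trans hG1 hG2
    have := mul_le_mul_of_nonneg_left hcomp hx.1
    nlinarith [this]
  have hi0 := int_FG hFmeas hF hμcont hdμ hμ (y + t • v)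
  have hi1 := int_FG hFmeas hF hμcont hdμ hμ y
  have hi2 := int_FG hFmeas hF hμcont hdμ hμ (y + v)
  have hiR : Integrable (fun x => (1 - t) * (F x * auxG μf dμ ‖y x‖)
      + t * (F x * auxG μf dμ ‖(y + v) x‖)) γm := (hi1.const_mul _).add (hi2.const_mul _)
  have hmono2 := integral_mono_ae hi0 hiR key
  have hRrw : ∫ x, ((1 - t) * (F x * auxG μf dμ ‖y x‖)
      + t * (F x * auxG μf dμ ‖(y + v) x‖)) ∂γm
      = (1 - t) * (∫ x, F x * auxG μf dμ ‖y x‖ ∂γm)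
        + t * (∫ x, F x * auxG μf dμ ‖(y + v) x‖ ∂γm) := by
    rw [integral_add (hi1.const_mul _) (hi2.const_mul _), integral_const_mul, integral_const_mul]
  rw [hRrw] at hmono2
  linarith only [hmono2]

lemma q_expand (hFmeas : Measurable F) (hF : ∀ᵐ x ∂γm, 0 ≤ F x ∧ F x ≤ Fbar)
    (y v : X) (t : ℝ) :
    ∫ x, F x * ‖(y + t • v) x‖ ^ 2 ∂γm
      = (∫ x, F x * ‖y x‖ ^ 2 ∂γm) + (2 * t) * (∫ x, F x * (inner ℝ (y x) (v x) : ℝ) ∂γm)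
        + t ^ 2 * (∫ x, F x * ‖v x‖ ^ 2 ∂γm) := by
  have hpt : ∀ᵐ x ∂γm, F x * ‖(y + t • v) x‖ ^ 2
      = F x * ‖y x‖ ^ 2 + (2 * t) * (F x * (inner ℝ (y x) (v x) : ℝ))
        + t ^ 2 * (F x * ‖v x‖ ^ 2) := by
    filter_upwards [lp_coe_add_smul y v t] with x h1
    rw [h1, norm_add_sq_real, real_inner_smul_right, norm_smul, Real.norm_eq_abs,
      mul_pow, sq_abs]
    ring
  rw [integral_congr_ae hpt]
  have hA := int_Fnormsq hFmeas hF y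
  have hB := (int_Finner hFmeas hF y v).const_mul (2 * t)
  have hC := (int_Fnormsq hFmeas hF v).const_mul (t ^ 2)
  have hAB : Integrable (fun x => F x * ‖y x‖ ^ 2
      + (2 * t) * (F x * (inner ℝ (y x) (v x) : ℝ))) γm := hA.add hB
  rw [integral_add hAB hC, integral_add hA hB, integral_const_mul, integral_const_mul]

lemma j_decomp (hFmeas : Measurable F) (hF : ∀ᵐ x ∂γm, 0 ≤ F x ∧ F x ≤ Fbar)
    (hμcont : Continuous μf) (hdμ : 0 < dμ)
    (hμ : ∀ s, 0 ≤ s → 0 ≤ μf s ∧ μf s ≤ μbar) (u : X) :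
    ∫ x, F x * (∫ s in (0:ℝ)..‖u x‖, μf s) ∂γm
      = (∫ x, F x * auxG μf dμ ‖u x‖ ∂γm) - dμ / 2 * ∫ x, F x * ‖u x‖ ^ 2 ∂γm := by
  have hpt : ∀ x, F x * (∫ s in (0:ℝ)..‖u x‖, μf s)
      = F x * auxG μf dμ ‖u x‖ - dμ / 2 * (F x * ‖u x‖ ^ 2) := by
    intro x
    rw [auxG_decomp dμ hμcont]
    ring
  rw [integral_congr_ae (Filter.Eventually.of_forall hpt),
    integral_sub (int_FG hFmeas hF hμcont hdμ hμ u) ((int_Fnormsq hFmeas hF u).const_mul _),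
    integral_const_mul]

lemma binner_bound (hFmeas : Measurable F) (hF : ∀ᵐ x ∂γm, 0 ≤ F x ∧ F x ≤ Fbar)
    (hFbar : 0 ≤ Fbar) (z w : X) {ε : ℝ} (hε : 0 < ε) (hzn : ‖z‖ ≤ ε) :
    |∫ x, F x * (inner ℝ (z x) (w x) : ℝ) ∂γm| ≤ ε * (Fbar * (1 + ‖w‖ ^ 2) / 2) := by
  have h1 : |∫ x, F x * (inner ℝ (z x) (w x) : ℝ) ∂γm|
      ≤ ∫ x, |F x * (inner ℝ (z x) (w x) : ℝ)| ∂γm :=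
    norm_integral_le_integral_norm (μ := γm) (fun x => F x * (inner ℝ (z x) (w x) : ℝ))
  have hiab := (int_Finner hFmeas hF z w).abs
  have hiR : Integrable (fun x => Fbar * (1 / (2 * ε) * ‖z x‖ ^ 2 + ε / 2 * ‖w x‖ ^ 2)) γm :=
    (((lp_int_normsq z).const_mul _).add ((lp_int_normsq w).const_mul _)).const_mul _
  have key : ∀ᵐ x ∂γm, |F x * (inner ℝ (z x) (w x) : ℝ)|
      ≤ Fbar * (1 / (2 * ε) * ‖z x‖ ^ 2 + ε / 2 * ‖w x‖ ^ 2) := by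
    filter_upwards [hF] with x hx
    have hi : |(inner ℝ (z x) (w x) : ℝ)| ≤ ‖z x‖ * ‖w x‖ := abs_real_inner_le_norm _ _
    have ham : ‖w x‖ * ‖z x‖ ≤ ε / 2 * ‖w x‖ ^ 2 + 1 / (2 * ε) * ‖z x‖ ^ 2 := amgm hε
    rw [abs_mul, abs_of_nonneg hx.1]
    have h2 : F x * |(inner ℝ (z x) (w x) : ℝ)| ≤ Fbar * |(inner ℝ (z x) (w x) : ℝ)| :=
      mul_le_mul_of_nonneg_right hx.2 (abs_nonneg _)
    have h3 : |(inner ℝ (z x) (w x) : ℝ)| ≤ 1 / (2 * ε) * ‖z x‖ ^ 2 + ε / 2 * ‖w x‖ ^ 2 := by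
      nlinarith [hi, ham]
    nlinarith [mul_le_mul_of_nonneg_left h3 hFbar, h2, h3, abs_nonneg (inner ℝ (z x) (w x) : ℝ)]
  have h4 := integral_mono_ae hiab hiR key
  have hRrw : ∫ x, Fbar * (1 / (2 * ε) * ‖z x‖ ^ 2 + ε / 2 * ‖w x‖ ^ 2) ∂γm
      = Fbar * (1 / (2 * ε) * ‖z‖ ^ 2 + ε / 2 * ‖w‖ ^ 2) := by
    rw [integral_const_mul, integral_add ((lp_int_normsq z).const_mul _)
      ((lp_int_normsq w).const_mul _), integral_const_mul, integral_const_mul,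
      lp_normsq_eq, lp_normsq_eq]
  rw [hRrw] at h4
  have hz2 : ‖z‖ ^ 2 ≤ ε ^ 2 := pow_le_pow_left₀ (norm_nonneg z) hzn 2
  have h5 : 1 / (2 * ε) * ‖z‖ ^ 2 ≤ ε / 2 := by
    rw [div_mul_eq_mul_div, div_le_div_iff₀ (by linarith) (by norm_num)]
    linarith only [hz2]
  have h6 : Fbar * (1 / (2 * ε) * ‖z‖ ^ 2 + ε / 2 * ‖w‖ ^ 2)
      ≤ Fbar * (ε / 2 + ε / 2 * ‖w‖ ^ 2) :=
    mul_le_mul_of_nonneg_left (by linarith only [h5]) hFbar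
  have hring : Fbar * (ε / 2 + ε / 2 * ‖w‖ ^ 2) = ε * (Fbar * (1 + ‖w‖ ^ 2) / 2) := by ring
  linarith only [h1, h4, h6, hring]
lemma clarke_bound (hFmeas : Measurable F) (hF : ∀ᵐ x ∂γm, 0 ≤ F x ∧ F x ≤ Fbar)
    (hμcont : Continuous μf) (hdμ : 0 < dμ)
    (hμ : ∀ s, 0 ≤ s → 0 ≤ μf s ∧ μf s ≤ μbar)
    (hmono : ∀ s₁ s₂, 0 ≤ s₁ → 0 ≤ s₂ →
      (μf s₁ - μf s₂) * (s₁ - s₂) ≥ -dμ * |s₁ - s₂| ^ 2)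
    (hFbar : 0 ≤ Fbar) (hμbar : 0 ≤ μbar)
    (J : X → ℝ)
    (hJ : ∀ v : X, J v = ∫ x, F x * (∫ s in (0:ℝ)..‖v x‖, μf s) ∂γm)
    (p w : X) :
    clarkeDeriv J p w ≤ (∫ x, F x * auxG μf dμ ‖(p + w) x‖ ∂γm)
      - (∫ x, F x * auxG μf dμ ‖p x‖ ∂γm)
      - dμ * ∫ x, F x * (inner ℝ (p x) (w x) : ℝ) ∂γm := by
  -- the uniform bound on difference quotients
  set K := Fbar * μbar * ∫ x, ‖w x‖ ∂γm with hKdef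
  have hK0 : 0 ≤ K := by
    have : 0 ≤ ∫ x, ‖w x‖ ∂γm := integral_nonneg fun x => norm_nonneg _
    positivity
  have hquot : ∀ (y : X) (t : ℝ), 0 < t → |(J (y + t • w) - J y) / t| ≤ K := by
    intro y t ht
    have hae : ∀ᵐ x ∂γm, |F x * (∫ s in (0:ℝ)..‖(y + t • w) x‖, μf s)
        - F x * (∫ s in (0:ℝ)..‖y x‖, μf s)| ≤ Fbar * μbar * (t * ‖w x‖) := by
      filter_upwards [hF, lp_coe_add_smul y w t] with x hx h1
      have hlip := auxMu_lip hμcont hμ (norm_nonneg ((y + t • w) x)) (norm_nonneg (y x))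
      have hnd : |‖(y + t • w) x‖ - ‖y x‖| ≤ t * ‖w x‖ := by
        rw [h1]
        have := abs_norm_sub_norm_le (y x + t • w x) (y x)
        have he : y x + t • w x - y x = t • w x := by abel
        rw [he, norm_smul, Real.norm_eq_abs, abs_of_pos ht] at this
        exact this
      have h2 : |(∫ s in (0:ℝ)..‖(y + t • w) x‖, μf s) - ∫ s in (0:ℝ)..‖y x‖, μf s|
          ≤ μbar * (t * ‖w x‖) :=
        le_trans hlip (mul_le_mul_of_nonneg_left hnd hμbar)
      calc |F x * (∫ s in (0:ℝ)..‖(y + t • w) x‖, μf s)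
            - F x * (∫ s in (0:ℝ)..‖y x‖, μf s)|
          = F x * |(∫ s in (0:ℝ)..‖(y + t • w) x‖, μf s) - ∫ s in (0:ℝ)..‖y x‖, μf s| := by
            rw [← mul_sub, abs_mul, abs_of_nonneg hx.1]
        _ ≤ Fbar * (μbar * (t * ‖w x‖)) := by
            apply mul_le_mul hx.2 h2 (abs_nonneg _) hFbar
        _ = Fbar * μbar * (t * ‖w x‖) := by ring
    have hi1 := int_FMu hFmeas hF hμcont hμ (y + t • w)
    have hi2 := int_FMu hFmeas hF hμcont hμ y
    have hiL : Integrable (fun x => F x * (∫ s in (0:ℝ)..‖(y + t • w) x‖, μf s)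
        - F x * (∫ s in (0:ℝ)..‖y x‖, μf s)) γm := hi1.sub hi2
    have hJd : |J (y + t • w) - J y| ≤ Fbar * μbar * (t * ∫ x, ‖w x‖ ∂γm) := by
      rw [hJ (y + t • w), hJ y, ← integral_sub hi1 hi2]
      have habs := norm_integral_le_integral_norm (μ := γm)
        (fun x => F x * (∫ s in (0:ℝ)..‖(y + t • w) x‖, μf s)
          - F x * (∫ s in (0:ℝ)..‖y x‖, μf s))
      have hmono3 := integral_mono_ae hiL.abs
        ((((lp_int_norm w).const_mul t).const_mul (Fbar * μbar))) hae
      have hrw : ∫ x, Fbar * μbar * (t * ‖w x‖) ∂γm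
          = Fbar * μbar * (t * ∫ x, ‖w x‖ ∂γm) := by
        rw [integral_const_mul, integral_const_mul]
      rw [hrw] at hmono3
      exact le_trans habs hmono3
    rw [abs_div, abs_of_pos ht, div_le_iff₀ ht]
    calc |J (y + t • w) - J y| ≤ Fbar * μbar * (t * ∫ x, ‖w x‖ ∂γm) := hJd
      _ = K * t := by rw [hKdef]; ring
  -- properties of the inner sets
  have hSne : ∀ ε : ℝ, 0 < ε → ((J (p + (ε/2) • w) - J p) / (ε/2)) ∈
      { q : ℝ | ∃ (y : X) (t : ℝ), ‖y - p‖ < ε ∧ 0 < t ∧ t < ε ∧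
          q = (J (y + t • w) - J y) / t } := by
    intro ε hε
    exact ⟨p, ε/2, by simpa using hε, by linarith, by linarith, rfl⟩
  have hSbdd : ∀ ε : ℝ, 0 < ε → ∀ q ∈ { q : ℝ | ∃ (y : X) (t : ℝ), ‖y - p‖ < ε ∧ 0 < t ∧ t < ε ∧
          q = (J (y + t • w) - J y) / t }, |q| ≤ K := by
    rintro ε hε q ⟨y, t, hy, ht, htε, rfl⟩
    exact hquot y t ht
  have houter_bdd : BddBelow { c : ℝ | ∃ ε : ℝ, 0 < ε ∧
      c = sSup { q : ℝ | ∃ (y : X) (t : ℝ), ‖y - p‖ < ε ∧ 0 < t ∧ t < ε ∧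
          q = (J (y + t • w) - J y) / t } } := by
    refine ⟨-K, ?_⟩
    rintro c ⟨ε, hε, rfl⟩
    have hub : BddAbove { q : ℝ | ∃ (y : X) (t : ℝ), ‖y - p‖ < ε ∧ 0 < t ∧ t < ε ∧
          q = (J (y + t • w) - J y) / t } :=
      ⟨K, fun q hq => (abs_le.1 (hSbdd ε hε q hq)).2⟩
    have hmem := hSne ε hε
    have := le_csSup hub hmem
    have hge := (abs_le.1 (hquot p (ε/2) (by linarith))).1
    linarith
  -- main estimate
  set D := (∫ x, F x * auxG μf dμ ‖(p + w) x‖ ∂γm)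
      - (∫ x, F x * auxG μf dμ ‖p x‖ ∂γm)
      - dμ * ∫ x, F x * (inner ℝ (p x) (w x) : ℝ) ∂γm with hDdef
  set M : ℝ := ‖p‖ + ‖w‖ + 1 with hMdef
  set C₁ : ℝ := Fbar / 2 * (3 * μbar ^ 2 * (γm Set.univ).toReal + 12 * dμ ^ 2 * M ^ 2 + 1)
    with hC1def
  set C₂ : ℝ := Fbar * (1 + ‖w‖ ^ 2) / 2 with hC2def
  set C : ℝ := C₁ + C₁ + dμ * C₂ with hCdef
  have hγpos : (0:ℝ) ≤ (γm Set.univ).toReal := ENNReal.toReal_nonneg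
  have hC10 : 0 ≤ C₁ := by
    rw [hC1def]; positivity
  have hC20 : 0 ≤ C₂ := by
    rw [hC2def]; positivity
  have hC0 : 0 ≤ C := by
    rw [hCdef]; positivity
  refine le_of_forall_pos_le_add fun δ hδ => ?_
  set ε : ℝ := min 1 (δ / (C + 1)) with hεdef
  have hε : 0 < ε := lt_min one_pos (by positivity)
  have hε1 : ε ≤ 1 := min_le_left _ _
  have helem : ∀ q ∈ { q : ℝ | ∃ (y : X) (t : ℝ), ‖y - p‖ < ε ∧ 0 < t ∧ t < ε ∧
      q = (J (y + t • w) - J y) / t }, q ≤ D + ε * C := by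
    rintro q ⟨y, t, hy, ht, htε, rfl⟩
    have ht1 : t ≤ 1 := le_trans htε.le hε1
    -- decomposition of the difference
    have hd1 := j_decomp hFmeas hF hμcont hdμ hμ (y + t • w)
    have hd2 := j_decomp hFmeas hF hμcont hdμ hμ y
    have hqe := q_expand hFmeas hF y w t
    have hslope := jc_slope hFmeas hF hμcont hdμ hμ hmono y w ht ht1
    have hQw : 0 ≤ ∫ x, F x * ‖w x‖ ^ 2 ∂γm := by
      refine integral_nonneg_of_ae ?_
      filter_upwards [hF] with x hx
      exact mul_nonneg hx.1 (sq_nonneg _)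
    have hJdiff : J (y + t • w) - J y
        ≤ t * ((∫ x, F x * auxG μf dμ ‖(y + w) x‖ ∂γm)
            - (∫ x, F x * auxG μf dμ ‖y x‖ ∂γm))
          - dμ * t * (∫ x, F x * (inner ℝ (y x) (w x) : ℝ) ∂γm)
          - dμ / 2 * t ^ 2 * (∫ x, F x * ‖w x‖ ^ 2 ∂γm) := by
      rw [hJ (y + t • w), hJ y, hd1, hd2, hqe]
      ring_nf
      ring_nf at hslope
      linarith only [hslope]
    have hquot2 : (J (y + t • w) - J y) / t
        ≤ ((∫ x, F x * auxG μf dμ ‖(y + w) x‖ ∂γm)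
            - (∫ x, F x * auxG μf dμ ‖y x‖ ∂γm))
          - dμ * (∫ x, F x * (inner ℝ (y x) (w x) : ℝ) ∂γm) := by
      rw [div_le_iff₀ ht]
      have hdrop : 0 ≤ dμ / 2 * t ^ 2 * (∫ x, F x * ‖w x‖ ^ 2 ∂γm) := by positivity
      calc J (y + t • w) - J y
          ≤ t * ((∫ x, F x * auxG μf dμ ‖(y + w) x‖ ∂γm)
              - (∫ x, F x * auxG μf dμ ‖y x‖ ∂γm))
            - dμ * t * (∫ x, F x * (inner ℝ (y x) (w x) : ℝ) ∂γm)
            - dμ / 2 * t ^ 2 * (∫ x, F x * ‖w x‖ ^ 2 ∂γm) := hJdiff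
        _ ≤ (((∫ x, F x * auxG μf dμ ‖(y + w) x‖ ∂γm)
              - (∫ x, F x * auxG μf dμ ‖y x‖ ∂γm))
            - dμ * (∫ x, F x * (inner ℝ (y x) (w x) : ℝ) ∂γm)) * t := by
            ring_nf
            linarith only [hdrop]
    -- shift from y to p
    have hyp : ‖y - p‖ ≤ ε := hy.le
    have hyn : ‖y‖ ≤ ‖p‖ + 1 := by
      have := norm_sub_norm_le y p
      linarith [le_trans hyp hε1]
    have hywn : ‖y + w‖ ≤ M := by
      have := norm_add_le y w
      rw [hMdef]; linarith
    have hpwn : ‖p + w‖ ≤ M := by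
      have := norm_add_le p w
      rw [hMdef]; linarith
    have hyn' : ‖y‖ ≤ M := by rw [hMdef]; linarith [norm_nonneg w]
    have hpn : ‖p‖ ≤ M := by rw [hMdef]; linarith [norm_nonneg w]
    have hywd : ‖(y + w) - (p + w)‖ ≤ ε := by
      have he : (y + w) - (p + w) = y - p := by abel
      rw [he]; exact hyp
    have hA := jc_lip hFmeas hF hμcont hdμ hμ hFbar hμbar (y + w) (p + w) hε hywd hywn hpwn
    have hB := jc_lip hFmeas hF hμcont hdμ hμ hFbar hμbar p y hε
      (by rw [norm_sub_rev]; exact hyp) hpn hyn'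
    -- inner-product shift
    have hBdiff : (∫ x, F x * (inner ℝ (y x) (w x) : ℝ) ∂γm)
        - (∫ x, F x * (inner ℝ (p x) (w x) : ℝ) ∂γm)
        = ∫ x, F x * (inner ℝ ((y - p) x) (w x) : ℝ) ∂γm := by
      rw [← integral_sub (int_Finner hFmeas hF y w) (int_Finner hFmeas hF p w)]
      refine integral_congr_ae ?_
      filter_upwards [lp_coe_sub y p] with x h1
      rw [h1, inner_sub_left]
      ring
    have hBb := binner_bound hFmeas hF hFbar (y - p) w hε hyp
    have habs := abs_le.1 hBb
    have hmul := mul_le_mul_of_nonneg_left habs.1 hdμ.le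
    have hsplit : (∫ x, F x * (inner ℝ (y x) (w x) : ℝ) ∂γm)
        = (∫ x, F x * (inner ℝ (p x) (w x) : ℝ) ∂γm)
          + ∫ x, F x * (inner ℝ ((y - p) x) (w x) : ℝ) ∂γm := by
      linarith only [hBdiff]
    have h₂ : (∫ x, F x * auxG μf dμ ‖(y + w) x‖ ∂γm)
          - (∫ x, F x * auxG μf dμ ‖y x‖ ∂γm)
          - dμ * (∫ x, F x * (inner ℝ (y x) (w x) : ℝ) ∂γm)
        = ((∫ x, F x * auxG μf dμ ‖(y + w) x‖ ∂γm)
            - (∫ x, F x * auxG μf dμ ‖(p + w) x‖ ∂γm))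
          + ((∫ x, F x * auxG μf dμ ‖p x‖ ∂γm)
            - (∫ x, F x * auxG μf dμ ‖y x‖ ∂γm))
          + ((∫ x, F x * auxG μf dμ ‖(p + w) x‖ ∂γm)
            - (∫ x, F x * auxG μf dμ ‖p x‖ ∂γm))
          - dμ * (∫ x, F x * (inner ℝ (p x) (w x) : ℝ) ∂γm)
          - dμ * (∫ x, F x * (inner ℝ ((y - p) x) (w x) : ℝ) ∂γm) := by
      rw [hsplit]; ring
    have h₃ : -(dμ * (∫ x, F x * (inner ℝ ((y - p) x) (w x) : ℝ) ∂γm))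
        ≤ dμ * (ε * (Fbar * (1 + ‖w‖ ^ 2) / 2)) := by
      linarith only [hmul]
    have h₄ : (J (y + t • w) - J y) / t
        ≤ ε * (Fbar / 2 * (3 * μbar ^ 2 * (γm Set.univ).toReal + 12 * dμ ^ 2 * M ^ 2 + 1))
          + ε * (Fbar / 2 * (3 * μbar ^ 2 * (γm Set.univ).toReal + 12 * dμ ^ 2 * M ^ 2 + 1))
          + ((∫ x, F x * auxG μf dμ ‖(p + w) x‖ ∂γm)
            - (∫ x, F x * auxG μf dμ ‖p x‖ ∂γm))
          - dμ * (∫ x, F x * (inner ℝ (p x) (w x) : ℝ) ∂γm)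
          + dμ * (ε * (Fbar * (1 + ‖w‖ ^ 2) / 2)) := by
      linarith only [hquot2, h₂, hA, hB, h₃]
    have hCeq : ε * (Fbar / 2 * (3 * μbar ^ 2 * (γm Set.univ).toReal + 12 * dμ ^ 2 * M ^ 2 + 1))
          + ε * (Fbar / 2 * (3 * μbar ^ 2 * (γm Set.univ).toReal + 12 * dμ ^ 2 * M ^ 2 + 1))
          + dμ * (ε * (Fbar * (1 + ‖w‖ ^ 2) / 2)) = ε * C := by
      rw [hCdef, hC1def, hC2def]; ring
    rw [hDdef]
    linarith only [h₄, hCeq]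
  have hmem : sSup { q : ℝ | ∃ (y : X) (t : ℝ), ‖y - p‖ < ε ∧ 0 < t ∧ t < ε ∧
      q = (J (y + t • w) - J y) / t } ∈ { c : ℝ | ∃ ε' : ℝ, 0 < ε' ∧
      c = sSup { q : ℝ | ∃ (y : X) (t : ℝ), ‖y - p‖ < ε' ∧ 0 < t ∧ t < ε' ∧
          q = (J (y + t • w) - J y) / t } } := ⟨ε, hε, rfl⟩
  have h1 := csInf_le houter_bdd hmem
  have h2 : sSup { q : ℝ | ∃ (y : X) (t : ℝ), ‖y - p‖ < ε ∧ 0 < t ∧ t < ε ∧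
      q = (J (y + t • w) - J y) / t } ≤ D + ε * C :=
    csSup_le ⟨_, hSne ε hε⟩ helem
  have hεC : ε * C ≤ δ := by
    have hle : ε ≤ δ / (C + 1) := min_le_right _ _
    have := mul_le_mul_of_nonneg_right hle hC0
    have h3 : δ / (C + 1) * C ≤ δ := by
      rw [div_mul_eq_mul_div, div_le_iff₀ (by linarith)]
      nlinarith
    exact le_trans this h3
  have : clarkeDeriv J p w ≤ D + ε * C := le_trans h1 h2
  linarith
end lp


/-- the Clarke subdifferential of the friction functional `J` is relaxed
monotone: `⟨η₁ − η₂, v₁ − v₂⟩ ≥ −F̄ d_μ ‖v₁ − v₂‖²` for all `ηᵢ ∈ ∂J(vᵢ)`. -/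
theorem clarke_subdiff_relaxed_monotone
    {Γ : Type*} [MeasurableSpace Γ] (γm : Measure Γ) [IsFiniteMeasure γm]
    (d : ℕ) (F : Γ → ℝ) (Fbar : ℝ) (hFmeas : Measurable F)
    (hF : ∀ᵐ x ∂γm, 0 ≤ F x ∧ F x ≤ Fbar)
    (μf : ℝ → ℝ) (μbar dμ : ℝ) (hμcont : Continuous μf) (hdμ : 0 < dμ)
    (hμ : ∀ s, 0 ≤ s → 0 ≤ μf s ∧ μf s ≤ μbar)
    (hmono : ∀ s₁ s₂, 0 ≤ s₁ → 0 ≤ s₂ →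
      (μf s₁ - μf s₂) * (s₁ - s₂) ≥ -dμ * |s₁ - s₂| ^ 2)
    (J : Lp (EuclideanSpace ℝ (Fin d)) 2 γm → ℝ)
    (hJ : ∀ v : Lp (EuclideanSpace ℝ (Fin d)) 2 γm,
      J v = ∫ x, F x * (∫ s in (0:ℝ)..‖v x‖, μf s) ∂γm) :
    ∀ (v₁ v₂ : Lp (EuclideanSpace ℝ (Fin d)) 2 γm)
      (η₁ η₂ : Lp (EuclideanSpace ℝ (Fin d)) 2 γm →L[ℝ] ℝ),
      η₁ ∈ clarkeSubdiff J v₁ → η₂ ∈ clarkeSubdiff J v₂ →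
      (η₁ - η₂) (v₁ - v₂) ≥ -(Fbar * dμ) * ‖v₁ - v₂‖ ^ 2 := by
  intro v₁ v₂ η₁ η₂ hη₁ hη₂
  by_cases hγ : γm = 0
  · -- degenerate case: the measure is zero
    have haebot : MeasureTheory.ae γm = ⊥ := by rw [hγ]; exact MeasureTheory.ae_zero
    have hae : (v₁ - v₂ : Lp (EuclideanSpace ℝ (Fin d)) 2 γm)
        =ᵐ[γm] (0 : Lp (EuclideanSpace ℝ (Fin d)) 2 γm) := by
      rw [Filter.EventuallyEq, haebot]
      exact Filter.eventually_bot
    have hv : v₁ - v₂ = 0 := by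
      ext1
      exact hae
    rw [hv, map_zero]
    simp
  · -- nondegenerate case
    have hμbar : 0 ≤ μbar := le_trans (hμ 0 le_rfl).1 (hμ 0 le_rfl).2
    have hFbar : 0 ≤ Fbar := by
      have : (Filter.NeBot (ae γm)) := ae_neBot.mpr hγ
      obtain ⟨x, hx⟩ := hF.exists
      exact le_trans hx.1 hx.2
    have hc1 := clarke_bound hFmeas hF hμcont hdμ hμ hmono hFbar hμbar J hJ v₁ (v₂ - v₁)
    have hc2 := clarke_bound hFmeas hF hμcont hdμ hμ hmono hFbar hμbar J hJ v₂ (v₁ - v₂)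
    have he1 : v₁ + (v₂ - v₁) = v₂ := by abel
    have he2 : v₂ + (v₁ - v₂) = v₁ := by abel
    rw [he1] at hc1
    rw [he2] at hc2
    have hb1 : η₁ (v₂ - v₁) ≤ (∫ x, F x * auxG μf dμ ‖v₂ x‖ ∂γm)
        - (∫ x, F x * auxG μf dμ ‖v₁ x‖ ∂γm)
        - dμ * ∫ x, F x * (inner ℝ (v₁ x) ((v₂ - v₁) x) : ℝ) ∂γm :=
      le_trans (hη₁ (v₂ - v₁)) hc1
    have hb2 : η₂ (v₁ - v₂) ≤ (∫ x, F x * auxG μf dμ ‖v₁ x‖ ∂γm)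
        - (∫ x, F x * auxG μf dμ ‖v₂ x‖ ∂γm)
        - dμ * ∫ x, F x * (inner ℝ (v₂ x) ((v₁ - v₂) x) : ℝ) ∂γm :=
      le_trans (hη₂ (v₁ - v₂)) hc2
    -- the sum of the two inner-product integrals
    have hBsum : (∫ x, F x * (inner ℝ (v₁ x) ((v₂ - v₁) x) : ℝ) ∂γm)
        + (∫ x, F x * (inner ℝ (v₂ x) ((v₁ - v₂) x) : ℝ) ∂γm)
        = - ∫ x, F x * ‖(v₁ - v₂) x‖ ^ 2 ∂γm := by
      rw [← integral_add (int_Finner hFmeas hF v₁ (v₂ - v₁)) (int_Finner hFmeas hF v₂ (v₁ - v₂)),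
        ← integral_neg]
      refine integral_congr_ae ?_
      filter_upwards [lp_coe_sub v₂ v₁, lp_coe_sub v₁ v₂] with x h1 h2
      rw [h1, h2]
      have e1 : (inner ℝ (v₁ x) (v₂ x - v₁ x) : ℝ) = inner ℝ (v₁ x) (v₂ x) - ‖v₁ x‖ ^ 2 := by
        rw [inner_sub_right, real_inner_self_eq_norm_sq]
      have e2 : (inner ℝ (v₂ x) (v₁ x - v₂ x) : ℝ) = inner ℝ (v₂ x) (v₁ x) - ‖v₂ x‖ ^ 2 := by
        rw [inner_sub_right, real_inner_self_eq_norm_sq]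
      have e3 : ‖v₁ x - v₂ x‖ ^ 2 = ‖v₁ x‖ ^ 2 - 2 * inner ℝ (v₁ x) (v₂ x) + ‖v₂ x‖ ^ 2 :=
        norm_sub_sq_real (v₁ x) (v₂ x)
      have e4 : (inner ℝ (v₂ x) (v₁ x) : ℝ) = inner ℝ (v₁ x) (v₂ x) := real_inner_comm _ _
      rw [e1, e2, e3, e4]
      ring
    -- bound the quadratic term
    have hFb : (∫ x, F x * ‖(v₁ - v₂) x‖ ^ 2 ∂γm) ≤ Fbar * ‖v₁ - v₂‖ ^ 2 := by
      have h5 : (∫ x, F x * ‖(v₁ - v₂) x‖ ^ 2 ∂γm) ≤ ∫ x, Fbar * ‖(v₁ - v₂) x‖ ^ 2 ∂γm := by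
        refine integral_mono_ae (int_Fnormsq hFmeas hF (v₁ - v₂))
          ((lp_int_normsq (v₁ - v₂)).const_mul _) ?_
        filter_upwards [hF] with x hx
        exact mul_le_mul_of_nonneg_right hx.2 (sq_nonneg _)
      rw [integral_const_mul, lp_normsq_eq] at h5
      exact h5
    have hη1neg : η₁ (v₁ - v₂) = - η₁ (v₂ - v₁) := by
      rw [← map_neg]
      congr 1
      abel
    rw [ContinuousLinearMap.sub_apply, hη1neg, ge_iff_le]
    have hmul1 := mul_le_mul_of_nonneg_left hFb hdμ.le
    have hBmul : dμ * (∫ x, F x * (inner ℝ (v₁ x) ((v₂ - v₁) x) : ℝ) ∂γm)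
        + dμ * (∫ x, F x * (inner ℝ (v₂ x) ((v₁ - v₂) x) : ℝ) ∂γm)
        = -(dμ * ∫ x, F x * ‖(v₁ - v₂) x‖ ^ 2 ∂γm) := by
      rw [← mul_add, hBsum]; ring
    linarith only [hb1, hb2, hBmul, hmul1]
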